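/- Let d(x,y) = Σᵢ dᵢ(|xᵢ − yᵢ|) on ℝⁿ where each dᵢ : [0,∞) → [0,∞) is continuous, strictly increasing, and dᵢ(0) = 0. Fix r > 0 and let B_r = {x ∈ ℝⁿ : d(0,x) ≤ r}. Then for each standard basis vector eᵢ and each aᵢ with d(0, aᵢ eᵢ) = r, the point aᵢ eᵢ is a 2-extremal point of B_r; i.e., if u, u' ∈ B_r and u + u' = 2 aᵢ eᵢ, then u = u' = aᵢ eᵢ. -/
import Mathlib


/-- For the separable distance `d(x,y) = ∑ᵢ dᵢ(|xᵢ − yᵢ|)` built from continuous,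
strictly increasing `dᵢ` with `dᵢ(0) = 0`, every point `aᵢ eᵢ` on the sphere
`d(0, aᵢ eᵢ) = r` along a coordinate axis is a 2-extremal point of the ball
`B_r = {x : d(0,x) ≤ r}`. -/
theorem axis_points_are_two_extremal {n : ℕ}
    (di : Fin n → ℝ → ℝ)
    (hcont : ∀ i, ContinuousOn (di i) (Set.Ici 0))
    (hmono : ∀ i, StrictMonoOn (di i) (Set.Ici 0))
    (h0 : ∀ i, di i 0 = 0)
    (d : (Fin n → ℝ) → (Fin n → ℝ) → ℝ)
    (hd : ∀ x y, d x y = ∑ i, di i |x i - y i|)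
    (r : ℝ) (hr : 0 < r)
    (i : Fin n) (a : ℝ)
    (ha : d 0 (a • (Pi.single i 1 : Fin n → ℝ)) = r) :
    ∀ u u' : Fin n → ℝ, d 0 u ≤ r → d 0 u' ≤ r →
      u + u' = (2 : ℝ) • (a • (Pi.single i 1 : Fin n → ℝ)) →
      u = a • (Pi.single i 1 : Fin n → ℝ) ∧
      u' = a • (Pi.single i 1 : Fin n → ℝ) := by
  intro u u' hu hu' hsum
  have hnn : ∀ j (t : ℝ), 0 ≤ t → 0 ≤ di j t := by
    intro j t ht
    have := (hmono j).monotoneOn Set.self_mem_Ici (Set.mem_Ici.2 ht) ht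
    rw [h0 j] at this
    exact this
  -- the sphere condition
  have hai : di i |a| = r := by
    rw [hd] at ha
    rw [← ha]
    rw [Finset.sum_eq_single i]
    · simp [Pi.single_apply]
    · intro j _ hj
      simp [Pi.single_apply, hj, h0 j]
    · intro h; exact absurd (Finset.mem_univ i) h
  have hane : a ≠ 0 := by
    intro h
    rw [h, abs_zero, h0 i] at hai
    linarith
  have habs : (0:ℝ) < |a| := abs_pos.2 hane
  -- coordinates of the sum
  have hsum' : ∀ j, u j + u' j = if j = i then 2 * a else 0 := by
    intro j
    have := congrFun hsum j
    simpa [Pi.single_apply, mul_comm] using this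
  have hoff : ∀ j, j ≠ i → u' j = - u j := by
    intro j hj
    have := hsum' j
    rw [if_neg hj] at this
    linarith
  have hdiag : u i + u' i = 2 * a := by
    have := hsum' i
    rwa [if_pos rfl] at this
  -- decompose sums
  have hdec : ∀ v : Fin n → ℝ, d 0 v =
      di i |v i| + ∑ j ∈ Finset.univ.erase i, di j |v j| := by
    intro v
    rw [hd]
    rw [← Finset.add_sum_erase _ _ (Finset.mem_univ i)]
    simp
  have hSnn : ∀ v : Fin n → ℝ, 0 ≤ ∑ j ∈ Finset.univ.erase i, di j |v j| :=
    fun v => Finset.sum_nonneg fun j _ => hnn j _ (abs_nonneg _)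
  have hle : ∀ v : Fin n → ℝ, d 0 v ≤ r → di i |v i| ≤ r := by
    intro v hv
    rw [hdec v] at hv
    have := hSnn v
    linarith
  have habsle : ∀ v : Fin n → ℝ, d 0 v ≤ r → |v i| ≤ |a| := by
    intro v hv
    have h1 := hle v hv
    rw [← hai] at h1
    exact ((hmono i).le_iff_le (Set.mem_Ici.2 (abs_nonneg _))
      (Set.mem_Ici.2 (abs_nonneg _))).1 h1
  have hu_le := habsle u hu
  have hu'_le := habsle u' hu'
  have htri : 2 * |a| ≤ |u i| + |u' i| := by
    calc 2 * |a| = |u i + u' i| := by rw [hdiag, abs_mul]; simp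
      _ ≤ |u i| + |u' i| := abs_add_le _ _
  have hui : |u i| = |a| := by linarith
  have hu'i : |u' i| = |a| := by linarith
  -- off-axis coordinates vanish
  have hzero : ∀ (v : Fin n → ℝ), d 0 v ≤ r → |v i| = |a| →
      ∀ j, j ≠ i → v j = 0 := by
    intro v hv hvi j hj
    have hdv := hdec v
    rw [hvi, hai] at hdv
    have hS : ∑ j ∈ Finset.univ.erase i, di j |v j| ≤ 0 := by
      rw [hdv] at hv; linarith
    have hS0 : ∑ j ∈ Finset.univ.erase i, di j |v j| = 0 :=
      le_antisymm hS (hSnn v)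
    have := (Finset.sum_eq_zero_iff_of_nonneg
      (fun j _ => hnn j _ (abs_nonneg _))).1 hS0 j (Finset.mem_erase.2 ⟨hj, Finset.mem_univ j⟩)
    have hinj : |v j| = 0 := by
      have h0j : di j 0 = 0 := h0 j
      by_contra habsne
      have hpos : 0 < |v j| := lt_of_le_of_ne (abs_nonneg _) (Ne.symm habsne)
      have := hmono j Set.self_mem_Ici (Set.mem_Ici.2 (abs_nonneg (v j))) hpos
      rw [h0j, ‹di j |v j| = 0›] at this
      exact lt_irrefl 0 this
    exact abs_eq_zero.1 hinj
  have huoff := hzero u hu hui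
  have hu'off := hzero u' hu' hu'i
  -- diagonal coordinate
  have huia : u i = a := by
    rcases abs_eq_abs.1 hui with h | h
    · exact h
    · exfalso
      have : u' i = 3 * a := by linarith
      rw [this, abs_mul] at hu'i
      have : |(3:ℝ)| = 3 := by norm_num
      rw [this] at hu'i
      nlinarith [abs_pos.2 hane]
  have hu'ia : u' i = a := by linarith
  constructor <;> funext j <;> by_cases hj : j = i
  · subst hj; simp [Pi.single_apply, huia]
  · simp [Pi.single_apply, hj, huoff j hj]
  · subst hj; simp [Pi.single_apply, hu'ia]
  · simp [Pi.single_apply, hj, hu'off j hj]
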